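/- For each integer l ≥ 2, set r = l⁴ + 1, let N_l be the additive subgroup of ℝ⁴ generated by ℤ⁴ and (l/r, l²/r, 1/r, 1/r), let Δ_l ⊂ ℝ² be the convex hull of (1, 0), (−(l−1), 1), (−(l−1), −1), and let π : ℝ⁴ → ℝ² be the projection to the last two coordinates. Define m_X(l) = inf{ gauge Δ_l (q₁, q₂) + y₁ + y₂ : (q₁, q₂, y₁, y₂) ∈ N_l, (q₁,q₂,y₁,y₂) ≠ 0, y₁ ≥ 0, y₂ ≥ 0 } and m_Y(l) = inf{ A₁ + A₂ : (A₁, A₂) ∈ π(N_l), (A₁,A₂) ≠ 0, A₁ ≥ 0, A₂ ≥ 0 }. Then for every l ≥ 2 one has m_X(l) ≤ 2/l and m_Y(l) ≤ 512 · m_X(l)⁴. -/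

import Mathlib

open Pointwise

/-- The lattice `N_l = ℤ⁴ + ℤ·(l/r, l²/r, 1/r, 1/r)` with `r = l⁴ + 1`. -/
def exampleLattice (l : ℕ) : AddSubgroup ((ℝ × ℝ) × (ℝ × ℝ)) :=
  AddSubgroup.closure
    ({p : (ℝ × ℝ) × (ℝ × ℝ) | ∃ a b c d : ℤ, p = (((a : ℝ), (b : ℝ)), ((c : ℝ), (d : ℝ)))} ∪
      {(((l : ℝ) / ((l : ℝ) ^ 4 + 1), (l : ℝ) ^ 2 / ((l : ℝ) ^ 4 + 1)),
        (1 / ((l : ℝ) ^ 4 + 1), 1 / ((l : ℝ) ^ 4 + 1)))})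

/-- The simplex `Δ_l = conv{(1,0), (−(l−1),1), (−(l−1),−1)}`. -/
def exampleSimplex (l : ℕ) : Set (ℝ × ℝ) :=
  convexHull ℝ {((1 : ℝ), (0 : ℝ)), (-((l : ℝ) - 1), 1), (-((l : ℝ) - 1), -1)}

lemma simplex_mem {l : ℕ} (hl : 2 ≤ l) {x : ℝ × ℝ}
    (h1 : x.1 + (l : ℝ) * |x.2| ≤ 1) (h2 : 1 - (l : ℝ) ≤ x.1) :
    x ∈ exampleSimplex l := by
  have hl2 : (2 : ℝ) ≤ (l : ℝ) := by exact_mod_cast hl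
  have hlpos : (0 : ℝ) < l := by linarith
  set L := (l : ℝ)
  set w : Fin 3 → ℝ := ![1 - (1 - x.1) / L, ((1 - x.1) / L + x.2) / 2, ((1 - x.1) / L - x.2) / 2]
    with hw
  set z : Fin 3 → ℝ × ℝ := ![((1 : ℝ), (0 : ℝ)), (-(L - 1), 1), (-(L - 1), -1)] with hz
  have habs : |x.2| * L ≤ 1 - x.1 := by
    nlinarith [abs_nonneg x.2]
  have h2' : (1 - x.1) / L ≤ 1 := by
    rw [div_le_one hlpos]; linarith
  have hx2 : |x.2| ≤ (1 - x.1) / L := by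
    rw [le_div_iff₀ hlpos]; exact habs
  have hw0 : ∀ i ∈ Finset.univ, 0 ≤ w i := by
    intro i _
    fin_cases i <;> simp [hw]
    · linarith
    · have := neg_abs_le x.2; linarith
    · have := le_abs_self x.2; linarith
  have hwsum : ∑ i, w i = 1 := by
    simp [hw, Fin.sum_univ_three]; ring
  have hcm : Finset.univ.centerMass w z = x := by
    rw [Finset.centerMass_eq_of_sum_1 _ _ hwsum]
    simp [hz, hw, Fin.sum_univ_three, Prod.ext_iff, Prod.smul_def, smul_eq_mul]
    constructor
    · field_simp; ring
    · ring
  rw [exampleSimplex, ← hcm]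
  refine Finset.centerMass_mem_convexHull _ hw0 (by rw [hwsum]; norm_num) ?_
  intro i _
  fin_cases i <;> simp [hz, L]

lemma mem_smul_simplex {l : ℕ} (hl : 2 ≤ l) {x : ℝ × ℝ} {lam : ℝ} (hlam : 0 < lam)
    (h1 : x.1 + (l : ℝ) * |x.2| ≤ lam) (h2 : (1 - (l : ℝ)) * lam ≤ x.1) :
    x ∈ lam • exampleSimplex l := by
  have hl2 : (2 : ℝ) ≤ (l : ℝ) := by exact_mod_cast hl
  rw [Set.mem_smul_set]
  refine ⟨(x.1 / lam, x.2 / lam), ?_, ?_⟩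
  · refine simplex_mem hl ?_ ?_
    · have : |x.2 / lam| = |x.2| / lam := by
        rw [abs_div, abs_of_pos hlam]
      rw [this]
      show x.1 / lam + (l : ℝ) * (|x.2| / lam) ≤ 1
      rw [mul_div_assoc']
      rw [← add_div, div_le_one hlam]
      exact h1
    · show 1 - (l : ℝ) ≤ x.1 / lam
      rw [le_div_iff₀ hlam]
      calc (1 - (l : ℝ)) * lam = (1 - (l:ℝ)) * lam := rfl
        _ ≤ x.1 := h2
  · show lam • (x.1 / lam, x.2 / lam) = x
    rw [Prod.smul_def, smul_eq_mul, smul_eq_mul]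
    rw [mul_div_cancel₀ _ hlam.ne', mul_div_cancel₀ _ hlam.ne']

lemma gauge_simplex_le {l : ℕ} (hl : 2 ≤ l) {x : ℝ × ℝ} {lam : ℝ} (hlam : 0 < lam)
    (h1 : x.1 + (l : ℝ) * |x.2| ≤ lam) (h2 : (1 - (l : ℝ)) * lam ≤ x.1) :
    gauge (exampleSimplex l) x ≤ lam :=
  gauge_le_of_mem hlam.le (mem_smul_simplex hl hlam h1 h2)

lemma gauge_simplex_ge {l : ℕ} (hl : 2 ≤ l) (α β : ℝ)
    (hv1 : α ≤ 1) (hv2 : α * (-((l : ℝ) - 1)) + β ≤ 1) (hv3 : α * (-((l : ℝ) - 1)) - β ≤ 1)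
    (x : ℝ × ℝ) : α * x.1 + β * x.2 ≤ gauge (exampleSimplex l) x := by
  have hl2 : (2 : ℝ) ≤ (l : ℝ) := by exact_mod_cast hl
  have hhalf : exampleSimplex l ⊆ {p : ℝ × ℝ | α * p.1 + β * p.2 ≤ 1} := by
    rw [exampleSimplex]
    refine convexHull_min ?_ ?_
    · intro p hp
      rcases hp with h | h | h <;> subst h <;> simp <;> linarith
    · exact convex_halfSpace_le ⟨fun a b => by simp; ring, fun c a => by simp; ring⟩ 1
  rcases le_or_gt (α * x.1 + β * x.2) 0 with h | h
  · exact h.trans (gauge_nonneg x)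
  · unfold gauge
    refine le_csInf ?_ ?_
    · refine ⟨|x.1| + (l : ℝ) * |x.2| + 1, ?_, ?_⟩
      · positivity
      · refine mem_smul_simplex hl (by positivity) ?_ ?_
        · nlinarith [le_abs_self x.1, abs_nonneg x.1, abs_nonneg x.2]
        · have hA : (0 : ℝ) ≤ |x.1| + (l : ℝ) * |x.2| + 1 := by positivity
          nlinarith [neg_abs_le x.1, abs_nonneg x.1, abs_nonneg x.2,
            mul_nonneg (by linarith : (0 : ℝ) ≤ (l : ℝ) - 2) hA]
    · rintro r ⟨hr0, hr⟩
      rw [Set.mem_smul_set] at hr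
      obtain ⟨y, hy, hxy⟩ := hr
      have h1 := hhalf hy
      simp only [Set.mem_setOf_eq] at h1
      have hx1 : x.1 = r * y.1 := by rw [← hxy]; rfl
      have hx2 : x.2 = r * y.2 := by rw [← hxy]; rfl
      rw [hx1, hx2]
      nlinarith

def latticeForm (l : ℕ) (p : (ℝ × ℝ) × (ℝ × ℝ)) : Prop :=
  ∃ a b c d k : ℤ,
    p = ((((a : ℝ) + (k : ℝ) * (l : ℝ) / ((l : ℝ) ^ 4 + 1),
          (b : ℝ) + (k : ℝ) * (l : ℝ) ^ 2 / ((l : ℝ) ^ 4 + 1))),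
        (((c : ℝ) + (k : ℝ) / ((l : ℝ) ^ 4 + 1), (d : ℝ) + (k : ℝ) / ((l : ℝ) ^ 4 + 1))))

def latticeSubgroup (l : ℕ) : AddSubgroup ((ℝ × ℝ) × (ℝ × ℝ)) where
  carrier := {p | latticeForm l p}
  zero_mem' := ⟨0, 0, 0, 0, 0, by norm_num [Prod.ext_iff]⟩
  add_mem' := by
    rintro p q ⟨a, b, c, d, k, rfl⟩ ⟨a', b', c', d', k', rfl⟩
    exact ⟨a + a', b + b', c + c', d + d', k + k', by
      simp only [Prod.mk_add_mk, Prod.ext_iff]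
      push_cast
      refine ⟨⟨by ring, by ring⟩, by ring, by ring⟩⟩
  neg_mem' := by
    rintro p ⟨a, b, c, d, k, rfl⟩
    exact ⟨-a, -b, -c, -d, -k, by
      simp only [Prod.neg_mk, Prod.ext_iff]
      push_cast
      refine ⟨⟨by ring, by ring⟩, by ring, by ring⟩⟩

lemma lattice_mem {l : ℕ} {p : (ℝ × ℝ) × (ℝ × ℝ)} (hp : p ∈ exampleLattice l) :
    latticeForm l p := by
  have : exampleLattice l ≤ latticeSubgroup l := by
    rw [exampleLattice, AddSubgroup.closure_le]
    rintro q (⟨a, b, c, d, rfl⟩ | hq)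
    · exact ⟨a, b, c, d, 0, by norm_num⟩
    · simp only [Set.mem_singleton_iff] at hq
      subst hq
      exact ⟨0, 0, 0, 0, 1, by norm_num⟩
  exact this hp

set_option maxHeartbeats 2000000 in
lemma key_lower {l : ℕ} (hl : 2 ≤ l) {p : (ℝ × ℝ) × (ℝ × ℝ)} (hp : p ∈ exampleLattice l)
    (hp0 : p ≠ 0) (hy1 : 0 ≤ p.2.1) (hy2 : 0 ≤ p.2.2) :
    1 / (4 * (l : ℝ)) ≤ gauge (exampleSimplex l) p.1 + p.2.1 + p.2.2 := by
  obtain ⟨a, b, c, d, k, rfl⟩ := lattice_mem hp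
  have hL2 : (2 : ℝ) ≤ (l : ℝ) := by exact_mod_cast hl
  have hR : (0 : ℝ) < (l : ℝ) ^ 4 + 1 := by positivity
  have e1 : (c : ℝ) + (k : ℝ) / ((l : ℝ) ^ 4 + 1)
      = ((c * ((l : ℤ) ^ 4 + 1) + k : ℤ) : ℝ) / ((l : ℝ) ^ 4 + 1) := by
    push_cast; field_simp
  have e2 : (d : ℝ) + (k : ℝ) / ((l : ℝ) ^ 4 + 1)
      = ((d * ((l : ℤ) ^ 4 + 1) + k : ℤ) : ℝ) / ((l : ℝ) ^ 4 + 1) := by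
    push_cast; field_simp
  have e3 : (a : ℝ) + (k : ℝ) * (l : ℝ) / ((l : ℝ) ^ 4 + 1)
      = ((a * ((l : ℤ) ^ 4 + 1) + k * l : ℤ) : ℝ) / ((l : ℝ) ^ 4 + 1) := by
    push_cast; field_simp
  have e4 : (b : ℝ) + (k : ℝ) * (l : ℝ) ^ 2 / ((l : ℝ) ^ 4 + 1)
      = ((b * ((l : ℤ) ^ 4 + 1) + k * l ^ 2 : ℤ) : ℝ) / ((l : ℝ) ^ 4 + 1) := by
    push_cast; field_simp
  show 1 / (4 * (l : ℝ)) ≤ gauge (exampleSimplex l)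
      ((a : ℝ) + (k : ℝ) * (l : ℝ) / ((l : ℝ) ^ 4 + 1),
       (b : ℝ) + (k : ℝ) * (l : ℝ) ^ 2 / ((l : ℝ) ^ 4 + 1)) +
      ((c : ℝ) + (k : ℝ) / ((l : ℝ) ^ 4 + 1)) + ((d : ℝ) + (k : ℝ) / ((l : ℝ) ^ 4 + 1))
  rw [e1, e2, e3, e4]
  have hy1' : (0 : ℝ) ≤ (c : ℝ) + (k : ℝ) / ((l : ℝ) ^ 4 + 1) := hy1
  have hy2' : (0 : ℝ) ≤ (d : ℝ) + (k : ℝ) / ((l : ℝ) ^ 4 + 1) := hy2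
  rw [e1] at hy1'
  rw [e2] at hy2'
  set RZ : ℤ := (l : ℤ) ^ 4 + 1 with hRZdef
  set P : ℤ := a * RZ + k * l with hPdef
  set Q : ℤ := b * RZ + k * l ^ 2 with hQdef
  set K : ℤ := c * RZ + k with hKdef
  set K' : ℤ := d * RZ + k with hK'def
  set R : ℝ := (l : ℝ) ^ 4 + 1 with hRdef
  set L : ℝ := (l : ℝ) with hLdef
  have hRZcast : ((RZ : ℤ) : ℝ) = R := by rw [hRZdef, hRdef]; push_cast; ring
  set g : ℝ := gauge (exampleSimplex l) ((P : ℝ) / R, (Q : ℝ) / R) with hgdef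
  -- nonnegativity
  have hgnn : 0 ≤ g := gauge_nonneg _
  have hKnnR : (0 : ℝ) ≤ (K : ℝ) := by
    have := mul_le_mul_of_nonneg_left hy1' hR.le
    rw [mul_zero, mul_div_cancel₀ _ hR.ne'] at this
    linarith
  have hK'nnR : (0 : ℝ) ≤ (K' : ℝ) := by
    have := mul_le_mul_of_nonneg_left hy2' hR.le
    rw [mul_zero, mul_div_cancel₀ _ hR.ne'] at this
    linarith
  have hKnn : (0 : ℤ) ≤ K := by exact_mod_cast hKnnR
  have hK'nn : (0 : ℤ) ≤ K' := by exact_mod_cast hK'nnR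
  -- gauge lower bounds
  have hL1 : (0 : ℝ) < L - 1 := by linarith
  have gplus : 1 * ((P : ℝ) / R) + L * ((Q : ℝ) / R) ≤ g :=
    gauge_simplex_ge hl 1 L le_rfl (by linarith) (by linarith) (((P : ℝ) / R, (Q : ℝ) / R) : ℝ × ℝ)
  have gminus : 1 * ((P : ℝ) / R) + (-L) * ((Q : ℝ) / R) ≤ g :=
    gauge_simplex_ge hl 1 (-L) le_rfl (by linarith) (by linarith) (((P : ℝ) / R, (Q : ℝ) / R) : ℝ × ℝ)
  have gleft : (-(1 / (L - 1))) * ((P : ℝ) / R) + 0 * ((Q : ℝ) / R) ≤ g := by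
    refine gauge_simplex_ge hl _ 0 ?_ ?_ ?_ (((P : ℝ) / R, (Q : ℝ) / R) : ℝ × ℝ)
    · have : 0 < 1 / (L - 1) := by positivity
      linarith
    · rw [show (-(1 / (L - 1))) * (-(L - 1)) + (0:ℝ) = 1 by field_simp; norm_num]
    · rw [show (-(1 / (L - 1))) * (-(L - 1)) - (0:ℝ) = 1 by field_simp; norm_num]
  -- denominator-free forms
  have Gplus : (P : ℝ) + L * (Q : ℝ) ≤ R * g := by
    have h' := mul_le_mul_of_nonneg_left gplus hR.le
    calc (P : ℝ) + L * (Q : ℝ) = R * (1 * ((P : ℝ) / R) + L * ((Q : ℝ) / R)) := by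
          field_simp
      _ ≤ R * g := h'
  have Gminus : (P : ℝ) - L * (Q : ℝ) ≤ R * g := by
    have h' := mul_le_mul_of_nonneg_left gminus hR.le
    calc (P : ℝ) - L * (Q : ℝ) = R * (1 * ((P : ℝ) / R) + (-L) * ((Q : ℝ) / R)) := by
          field_simp; ring
      _ ≤ R * g := h'
  have Gleft : -(P : ℝ) ≤ (L - 1) * (R * g) := by
    have h' := mul_le_mul_of_nonneg_left gleft (mul_nonneg hL1.le hR.le)
    calc -(P : ℝ) = ((L - 1) * R) * ((-(1 / (L - 1))) * ((P : ℝ) / R) + 0 * ((Q : ℝ) / R)) := by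
          field_simp; ring
      _ ≤ ((L - 1) * R) * g := h'
      _ = (L - 1) * (R * g) := by ring
  -- contradiction hypothesis
  by_contra hcon
  push_neg at hcon
  have Hcon : 4 * L * (R * g + (K : ℝ) + (K' : ℝ)) < R := by
    have hL0 : (0 : ℝ) < 4 * L := by linarith
    have h2 : (4 * L) * (R * (g + (K : ℝ) / R + (K' : ℝ) / R)) < (4 * L) * (R * (1 / (4 * L))) :=
      mul_lt_mul_of_pos_left (mul_lt_mul_of_pos_left hcon hR) hL0
    calc 4 * L * (R * g + (K : ℝ) + (K' : ℝ))
        = (4 * L) * (R * (g + (K : ℝ) / R + (K' : ℝ) / R)) := by field_simp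
      _ < (4 * L) * (R * (1 / (4 * L))) := h2
      _ = R := by field_simp
  have hRgnn : 0 ≤ R * g := mul_nonneg hR.le hgnn
  have h4Lnn : (0 : ℝ) ≤ 4 * L := by linarith
  have hA : 4 * L * (R * g) < R := by
    nlinarith [mul_nonneg h4Lnn hKnnR, mul_nonneg h4Lnn hK'nnR]
  have hB : 4 * L * (K : ℝ) < R := by
    nlinarith [mul_nonneg h4Lnn hRgnn, mul_nonneg h4Lnn hK'nnR]
  have hB' : 4 * L * (K' : ℝ) < R := by
    nlinarith [mul_nonneg h4Lnn hRgnn, mul_nonneg h4Lnn hKnnR]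
  have hKltR : (K : ℝ) < R := by nlinarith [mul_nonneg (by linarith : (0:ℝ) ≤ L - 2) hKnnR]
  have hK'ltR : (K' : ℝ) < R := by nlinarith [mul_nonneg (by linarith : (0:ℝ) ≤ L - 2) hK'nnR]
  have hRgltR : 8 * (R * g) < R := by nlinarith [mul_nonneg (by linarith : (0:ℝ) ≤ L - 2) hRgnn]
  have hLKlt : 4 * (L * (K : ℝ)) < R := by nlinarith [mul_nonneg (by linarith : (0:ℝ) ≤ L - 2) hKnnR]
  have hLKnn : 0 ≤ L * (K : ℝ) := mul_nonneg (by linarith) hKnnR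
  have hPle : (P : ℝ) ≤ R * g := by linarith
  clear_value RZ P Q K K' R L g
  -- Step A : K' = K
  have hK'K : K' = K := by
    have hdvd : RZ ∣ K' - K := ⟨d - c, by rw [hK'def, hKdef]; ring⟩
    have habs : |K' - K| < RZ := by
      rw [abs_lt]
      constructor
      · have : -((RZ : ℤ) : ℝ) < ((K' - K : ℤ) : ℝ) := by push_cast [hRZcast]; linarith
        exact_mod_cast this
      · have : ((K' - K : ℤ) : ℝ) < ((RZ : ℤ) : ℝ) := by push_cast [hRZcast]; linarith
        exact_mod_cast this
    have := Int.eq_zero_of_abs_lt_dvd hdvd habs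
    linarith
  -- Step B : P = l * K
  have hPK : P = (l : ℤ) * K := by
    have hdvd : RZ ∣ P - (l : ℤ) * K := ⟨a - l * c, by rw [hPdef, hKdef]; push_cast; ring⟩
    have habs : |P - (l : ℤ) * K| < RZ := by
      rw [abs_lt]
      constructor
      · have : -((RZ : ℤ) : ℝ) < ((P - (l : ℤ) * K : ℤ) : ℝ) := by
          push_cast [hRZcast]
          nlinarith
        exact_mod_cast this
      · have : ((P - (l : ℤ) * K : ℤ) : ℝ) < ((RZ : ℤ) : ℝ) := by
          push_cast [hRZcast]
          nlinarith
        exact_mod_cast this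
    have := Int.eq_zero_of_abs_lt_dvd hdvd habs
    linarith
  have hPKR : (P : ℝ) = L * (K : ℝ) := by rw [hPK, hLdef]; push_cast; ring
  have hPnnR : (0 : ℝ) ≤ (P : ℝ) := by rw [hPKR]; exact hLKnn
  -- divisibility for Q
  have hdvdQ : RZ ∣ Q * (l : ℤ) ^ 2 + K := ⟨b * l ^ 2 + c + k, by
    rw [hQdef, hKdef, hRZdef]; push_cast; ring⟩
  have hlz : (2 : ℤ) ≤ (l : ℤ) := by exact_mod_cast hl
  rcases eq_or_ne Q 0 with hQ0 | hQ0
  · -- Q = 0 forces p = 0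
    have hdvdK : RZ ∣ K := by rw [hQ0] at hdvdQ; simpa using hdvdQ
    have hKRZ : K < RZ := by
      have : (K : ℝ) < ((RZ : ℤ) : ℝ) := by rw [hRZcast]; exact hKltR
      exact_mod_cast this
    have hK0 : K = 0 := Int.eq_zero_of_abs_lt_dvd hdvdK (by rw [abs_of_nonneg hKnn]; exact hKRZ)
    have hP0 : P = 0 := by rw [hPK, hK0, mul_zero]
    exact hp0 (by
      rw [Prod.ext_iff, Prod.ext_iff, Prod.ext_iff]
      refine ⟨⟨?_, ?_⟩, ?_, ?_⟩ <;>
        simp only [e1, e2, e3, e4, ← hPdef, ← hQdef, ← hKdef, ← hK'def, ← hRZdef, ← hRdef,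
          hP0, hQ0, hK0, hK'K, hK0] <;>
        norm_num)
  · -- Q ≠ 0
    have GabsQ : (P : ℝ) + L * |(Q : ℝ)| ≤ R * g := by
      rcases abs_cases (Q : ℝ) with ⟨h, _⟩ | ⟨h, _⟩
      · rw [h]; linarith
      · rw [h]; linarith
    rcases eq_or_ne (Q * (l : ℤ) ^ 2 + K) 0 with h0 | h0
    · -- K = -Q l^2, so K ≥ l^2
      have hl2sq : (4 : ℤ) ≤ (l : ℤ) ^ 2 := by nlinarith
      have hQneg : Q ≤ -1 := by
        rcases lt_or_gt_of_ne hQ0 with h | h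
        · linarith
        · nlinarith [mul_le_mul_of_nonneg_right (by linarith : (1 : ℤ) ≤ Q)
            (by positivity : (0 : ℤ) ≤ (l : ℤ) ^ 2)]
      have hKge : (l : ℤ) ^ 2 ≤ K := by
        nlinarith [mul_nonneg (by linarith : (0 : ℤ) ≤ -Q - 1)
          (by positivity : (0 : ℤ) ≤ (l : ℤ) ^ 2)]
      have hKgeR : L ^ 2 ≤ (K : ℝ) := by
        have : (((l : ℤ) ^ 2 : ℤ) : ℝ) ≤ ((K : ℤ) : ℝ) := by exact_mod_cast hKge
        push_cast at this
        rw [hLdef]; exact this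
      have hL4 : 16 ≤ L ^ 4 := by
        have : (2 : ℝ) ^ 4 ≤ L ^ 4 := pow_le_pow_left₀ (by norm_num) hL2 4
        norm_num at this
        linarith
      have c3 : L * L ^ 2 ≤ L * (K : ℝ) := by nlinarith
      have c4 : L * (K : ℝ) ≤ R * g := by rw [← hPKR]; exact hPle
      nlinarith [mul_le_mul_of_nonneg_left (c3.trans c4) h4Lnn]
    · -- |Q l^2 + K| ≥ RZ
      have habs0 : RZ ≤ |Q * (l : ℤ) ^ 2 + K| :=
        Int.le_of_dvd (abs_pos.mpr h0) ((dvd_abs _ _).mpr hdvdQ)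
      have habs1 : RZ ≤ |Q| * (l : ℤ) ^ 2 + K := by
        calc RZ ≤ |Q * (l : ℤ) ^ 2 + K| := habs0
          _ ≤ |Q * (l : ℤ) ^ 2| + |K| := abs_add_le _ _
          _ = |Q| * (l : ℤ) ^ 2 + K := by
              rw [abs_mul, abs_of_nonneg (by positivity : (0:ℤ) ≤ (l : ℤ) ^ 2),
                abs_of_nonneg hKnn]
      have habs1R : R ≤ |(Q : ℝ)| * L ^ 2 + (K : ℝ) := by
        have : ((RZ : ℤ) : ℝ) ≤ ((|Q| * (l : ℤ) ^ 2 + K : ℤ) : ℝ) := by exact_mod_cast habs1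
        rw [hRZcast] at this
        push_cast at this
        rw [hLdef]
        linarith
      have c1 : L * |(Q : ℝ)| ≤ R * g := by linarith
      have hQabsnn : (0 : ℝ) ≤ |(Q : ℝ)| := abs_nonneg _
      nlinarith [mul_le_mul_of_nonneg_left c1 h4Lnn]


/-- `m_X(l)`: the mld of the total space `X_l`, as the infimum of
`gauge Δ_l (q₁,q₂) + y₁ + y₂` over nonzero points of `N_l` with `y₁, y₂ ≥ 0`. -/
noncomputable def mldX (l : ℕ) : ℝ :=
  sInf {s : ℝ | ∃ p ∈ exampleLattice l, p ≠ 0 ∧ 0 ≤ p.2.1 ∧ 0 ≤ p.2.2 ∧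
    s = gauge (exampleSimplex l) p.1 + p.2.1 + p.2.2}

/-- `m_Y(l)`: the mld of the base `Y_l`, as the infimum of `A₁ + A₂` over nonzero
nonnegative points of the projection of `N_l` to the last two coordinates. -/
noncomputable def mldY (l : ℕ) : ℝ :=
  sInf {s : ℝ | ∃ A : ℝ × ℝ, (∃ q : ℝ × ℝ, (q, A) ∈ exampleLattice l) ∧ A ≠ 0 ∧
    0 ≤ A.1 ∧ 0 ≤ A.2 ∧ s = A.1 + A.2}

lemma gen_mem (l : ℕ) :
    ((((l : ℝ) / ((l : ℝ) ^ 4 + 1), (l : ℝ) ^ 2 / ((l : ℝ) ^ 4 + 1)),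
      (1 / ((l : ℝ) ^ 4 + 1), 1 / ((l : ℝ) ^ 4 + 1)))) ∈ exampleLattice l :=
  AddSubgroup.subset_closure (Set.mem_union_right _ rfl)

lemma gen_ne_zero {l : ℕ} (hl : 2 ≤ l) :
    ((((l : ℝ) / ((l : ℝ) ^ 4 + 1), (l : ℝ) ^ 2 / ((l : ℝ) ^ 4 + 1)),
      (1 / ((l : ℝ) ^ 4 + 1), 1 / ((l : ℝ) ^ 4 + 1)))) ≠ 0 := by
  have hR : (0 : ℝ) < (l : ℝ) ^ 4 + 1 := by positivity
  intro h
  have h1 := congrArg (fun p : (ℝ × ℝ) × (ℝ × ℝ) => p.2.1) h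
  simp only [Prod.snd_zero, Prod.fst_zero] at h1
  have : (0 : ℝ) < 1 / ((l : ℝ) ^ 4 + 1) := by positivity
  rw [h1] at this
  exact lt_irrefl _ this

lemma mldX_bddBelow (l : ℕ) :
    BddBelow {s : ℝ | ∃ p ∈ exampleLattice l, p ≠ 0 ∧ 0 ≤ p.2.1 ∧ 0 ≤ p.2.2 ∧
      s = gauge (exampleSimplex l) p.1 + p.2.1 + p.2.2} := by
  refine ⟨0, ?_⟩
  rintro s ⟨p, _, _, h1, h2, rfl⟩
  have := gauge_nonneg (s := exampleSimplex l) p.1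
  linarith

lemma genX_mem_set {l : ℕ} (hl : 2 ≤ l) :
    gauge (exampleSimplex l)
        ((l : ℝ) / ((l : ℝ) ^ 4 + 1), (l : ℝ) ^ 2 / ((l : ℝ) ^ 4 + 1)) +
      1 / ((l : ℝ) ^ 4 + 1) + 1 / ((l : ℝ) ^ 4 + 1) ∈
    {s : ℝ | ∃ p ∈ exampleLattice l, p ≠ 0 ∧ 0 ≤ p.2.1 ∧ 0 ≤ p.2.2 ∧
      s = gauge (exampleSimplex l) p.1 + p.2.1 + p.2.2} := by
  have hR : (0 : ℝ) < (l : ℝ) ^ 4 + 1 := by positivity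
  exact ⟨_, gen_mem l, gen_ne_zero hl, by positivity, by positivity, rfl⟩

lemma mldX_le {l : ℕ} (hl : 2 ≤ l) : mldX l ≤ 2 / (l : ℝ) := by
  have hL2 : (2 : ℝ) ≤ (l : ℝ) := by exact_mod_cast hl
  have hR : (0 : ℝ) < (l : ℝ) ^ 4 + 1 := by positivity
  have hg : gauge (exampleSimplex l)
      ((l : ℝ) / ((l : ℝ) ^ 4 + 1), (l : ℝ) ^ 2 / ((l : ℝ) ^ 4 + 1)) ≤
      ((l : ℝ) ^ 3 + (l : ℝ)) / ((l : ℝ) ^ 4 + 1) := by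
    refine gauge_simplex_le hl (by positivity) ?_ ?_
    · show (l : ℝ) / ((l : ℝ) ^ 4 + 1) + (l : ℝ) * |(l : ℝ) ^ 2 / ((l : ℝ) ^ 4 + 1)| ≤ _
      rw [abs_of_nonneg (by positivity)]
      refine le_of_eq ?_
      field_simp
      ring
    · show (1 - (l : ℝ)) * (((l : ℝ) ^ 3 + (l : ℝ)) / ((l : ℝ) ^ 4 + 1)) ≤
        (l : ℝ) / ((l : ℝ) ^ 4 + 1)
      have h1 : (1 - (l : ℝ)) ≤ 0 := by linarith
      have h2 : (0 : ℝ) ≤ ((l : ℝ) ^ 3 + (l : ℝ)) / ((l : ℝ) ^ 4 + 1) := by positivity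
      have h3 : (0 : ℝ) ≤ (l : ℝ) / ((l : ℝ) ^ 4 + 1) := by positivity
      nlinarith
  have hmain : ((l : ℝ) ^ 3 + (l : ℝ)) / ((l : ℝ) ^ 4 + 1) +
      1 / ((l : ℝ) ^ 4 + 1) + 1 / ((l : ℝ) ^ 4 + 1) ≤ 2 / (l : ℝ) := by
    have hd : 2 / (l : ℝ) - (((l : ℝ) ^ 3 + (l : ℝ)) / ((l : ℝ) ^ 4 + 1) +
        1 / ((l : ℝ) ^ 4 + 1) + 1 / ((l : ℝ) ^ 4 + 1)) =
        ((l : ℝ) ^ 4 - (l : ℝ) ^ 2 - 2 * (l : ℝ) + 2) / ((l : ℝ) * ((l : ℝ) ^ 4 + 1)) := by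
      field_simp
      ring
    have hnum : (0 : ℝ) ≤ (l : ℝ) ^ 4 - (l : ℝ) ^ 2 - 2 * (l : ℝ) + 2 := by
      have a : (4 : ℝ) ≤ (l : ℝ) ^ 2 := by nlinarith
      have b : 2 * (l : ℝ) ≤ (l : ℝ) ^ 2 := by nlinarith
      nlinarith [mul_le_mul_of_nonneg_right a (by positivity : (0 : ℝ) ≤ (l : ℝ) ^ 2)]
    have hden : (0 : ℝ) < (l : ℝ) * ((l : ℝ) ^ 4 + 1) := by positivity
    have := div_nonneg hnum hden.le
    linarith
  calc mldX l ≤ gauge (exampleSimplex l)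
        ((l : ℝ) / ((l : ℝ) ^ 4 + 1), (l : ℝ) ^ 2 / ((l : ℝ) ^ 4 + 1)) +
      1 / ((l : ℝ) ^ 4 + 1) + 1 / ((l : ℝ) ^ 4 + 1) :=
        csInf_le (mldX_bddBelow l) (genX_mem_set hl)
    _ ≤ 2 / (l : ℝ) := by linarith

lemma mldX_ge {l : ℕ} (hl : 2 ≤ l) : 1 / (4 * (l : ℝ)) ≤ mldX l := by
  refine le_csInf ⟨_, genX_mem_set hl⟩ ?_
  rintro s ⟨p, hp, h0, h1, h2, rfl⟩
  exact key_lower hl hp h0 h1 h2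

lemma mldY_le {l : ℕ} (hl : 2 ≤ l) : mldY l ≤ 512 * (mldX l) ^ 4 := by
  have hL2 : (2 : ℝ) ≤ (l : ℝ) := by exact_mod_cast hl
  have hR : (0 : ℝ) < (l : ℝ) ^ 4 + 1 := by positivity
  have h1 : mldY l ≤ 1 / ((l : ℝ) ^ 4 + 1) + 1 / ((l : ℝ) ^ 4 + 1) := by
    refine csInf_le ⟨0, ?_⟩ ?_
    · rintro s ⟨A, _, _, hA1, hA2, rfl⟩
      linarith
    · refine ⟨(1 / ((l : ℝ) ^ 4 + 1), 1 / ((l : ℝ) ^ 4 + 1)),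
        ⟨_, gen_mem l⟩, ?_, by positivity, by positivity, rfl⟩
      intro h
      have h1 := congrArg Prod.fst h
      have : (0 : ℝ) < 1 / ((l : ℝ) ^ 4 + 1) := by positivity
      rw [show ((1 / ((l : ℝ) ^ 4 + 1), 1 / ((l : ℝ) ^ 4 + 1)) : ℝ × ℝ).1
        = 1 / ((l : ℝ) ^ 4 + 1) from rfl, Prod.fst_zero] at h1
      rw [h1] at this
      exact lt_irrefl _ this
  have h2 : 1 / ((l : ℝ) ^ 4 + 1) + 1 / ((l : ℝ) ^ 4 + 1) ≤ 512 * (1 / (4 * (l : ℝ))) ^ 4 := by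
    have : 512 * (1 / (4 * (l : ℝ))) ^ 4 = 2 / (l : ℝ) ^ 4 := by
      field_simp
      ring
    have h4 : (0 : ℝ) < (l : ℝ) ^ 4 := by positivity
    have e : 1 / ((l : ℝ) ^ 4 + 1) + 1 / ((l : ℝ) ^ 4 + 1) = 2 / ((l : ℝ) ^ 4 + 1) := by ring
    rw [this, e]
    exact div_le_div_of_nonneg_left (by norm_num) h4 (by linarith)
  have h3 : 512 * (1 / (4 * (l : ℝ))) ^ 4 ≤ 512 * (mldX l) ^ 4 := by
    have hx := mldX_ge hl
    have hnn : (0 : ℝ) ≤ 1 / (4 * (l : ℝ)) := by positivity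
    have := pow_le_pow_left₀ hnn hx 4
    linarith
  linarith

/-- Combinatorial form of Theorem 3: `m_X(l) ≤ 2/l` while `m_Y(l) ≤ 512 · m_X(l)⁴`. -/
theorem stmt_12 : ∀ l : ℕ, 2 ≤ l → mldX l ≤ 2 / (l : ℝ) ∧ mldY l ≤ 512 * (mldX l) ^ 4 :=
  fun _ hl => ⟨mldX_le hl, mldY_le hl⟩
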